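/- arXiv:2305.14801 — 2 statements merged into one kernel-verified Lean document; each statement's English description precedes it below -/
import Mathlib

section
/- Let U ⊂ ℝ^n be an open set with finite measure and let f : U × ℝ^m → ℝ be a normal integrand bounded from below. Let (u_k) be a uniformly bounded sequence of functions in L^∞(U;ℝ^m) generating a Young measure ν = {ν_x}_{x∈U}. Then liminf_{k→∞} esssup_{x∈U} f(x, u_k(x)) ≥ esssup_{x∈U} f̄(x), where f̄(x) := ν_x-esssup_{ξ∈ℝ^m} f(x,ξ). -/
open MeasureTheory Filter Topology Bornology ZeroAtInfty NNReal ENNReal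

noncomputable section

/-- A Young measure on `E`, parametrized over `(α, μ)`: a weakly* measurable family of
probability measures. -/
def IsYoungMeasure {α E : Type*} [MeasurableSpace α] [MeasurableSpace E] [TopologicalSpace E]
    (μ : Measure α) (ν : α → Measure E) : Prop :=
  (∀ᵐ x ∂μ, IsProbabilityMeasure (ν x)) ∧
  ∀ φ : C₀(E, ℝ), Measurable fun x => ∫ ξ, φ ξ ∂(ν x)

/-- The sequence of measurable functions `z j` generates the Young measure `ν`:
for every `h ∈ L¹` and every `φ ∈ C₀`, `∫ h(x) φ(z_j(x)) dx → ∫ h(x) ⟨ν_x, φ⟩ dx`. -/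
def GeneratesYM {α E : Type*} [MeasurableSpace α] [MeasurableSpace E] [TopologicalSpace E]
    (μ : Measure α) (z : ℕ → α → E) (ν : α → Measure E) : Prop :=
  (∀ j, Measurable (z j)) ∧ IsYoungMeasure μ ν ∧
  ∀ h : α → ℝ, Integrable h μ → ∀ φ : C₀(E, ℝ),
    Tendsto (fun j => ∫ x, h x * φ (z j x) ∂μ) atTop
      (𝓝 (∫ x, h x * ∫ ξ, φ ξ ∂(ν x) ∂μ))

/-- A continuous bump which is `1` on the closed ball of radius `r` and vanishes outside the
closed ball of radius `2r`. -/
lemma exists_bump {m : ℕ} (q : Fin m → ℝ) (r : ℝ) (hr : 0 < r) :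
    ∃ φ : C₀((Fin m → ℝ), ℝ),
      (∀ ξ, 0 ≤ φ ξ) ∧ (∀ ξ, φ ξ ≤ 1) ∧
      (∀ ξ, dist ξ q ≤ r → φ ξ = 1) ∧
      (∀ ξ, 2 * r ≤ dist ξ q → φ ξ = 0) := by
  have hcont : Continuous fun ξ : Fin m → ℝ => max 0 (min 1 (2 - dist ξ q / r)) := by
    fun_prop
  have hzero : ∀ ξ : Fin m → ℝ, 2 * r ≤ dist ξ q →
      max 0 (min 1 (2 - dist ξ q / r)) = 0 := by
    intro ξ h
    have h2 : (2 : ℝ) ≤ dist ξ q / r := (le_div_iff₀ hr).2 (by linarith)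
    exact max_eq_left (le_trans (min_le_right _ _) (by linarith))
  have hone : ∀ ξ : Fin m → ℝ, dist ξ q ≤ r →
      max 0 (min 1 (2 - dist ξ q / r)) = 1 := by
    intro ξ h
    have h0 : 0 ≤ dist ξ q := dist_nonneg
    have h2 : dist ξ q / r ≤ 1 := (div_le_one hr).2 h
    rw [min_eq_left (by linarith)]
    exact max_eq_right zero_le_one
  have hzai : Tendsto (fun ξ : Fin m → ℝ => max 0 (min 1 (2 - dist ξ q / r)))
      (cocompact _) (𝓝 0) := by
    have hev : ∀ᶠ ξ in cocompact (Fin m → ℝ),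
        max 0 (min 1 (2 - dist ξ q / r)) = 0 := by
      refine Filter.mem_of_superset
        (Filter.mem_cocompact.2 ⟨Metric.closedBall q (2 * r),
          isCompact_closedBall _ _, subset_rfl⟩) ?_
      intro ξ hξ
      have : ¬ dist ξ q ≤ 2 * r := by simpa [Metric.mem_closedBall] using hξ
      exact hzero ξ (le_of_lt (not_le.1 this))
    exact tendsto_const_nhds.congr' (hev.mono fun ξ h => h.symm)
  refine ⟨⟨⟨fun ξ => max 0 (min 1 (2 - dist ξ q / r)), hcont⟩, hzai⟩, ?_, ?_, ?_, ?_⟩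
  · intro ξ; exact le_max_left _ _
  · intro ξ; exact max_le zero_le_one (min_le_left _ _)
  · intro ξ h; exact hone ξ h
  · intro ξ h; exact hzero ξ h

/-- A measurable set inside the measurable hull of `E` which is disjoint from `E` is null. -/
lemma null_of_subset_toMeasurable {α : Type*} [MeasurableSpace α] (μ : Measure α)
    [IsFiniteMeasure μ] {E S : Set α} (hS : MeasurableSet S)
    (hSsub : S ⊆ toMeasurable μ E) (hdisj : ∀ x ∈ S, x ∉ E) : μ S = 0 := by
  have h1 : μ S + μ (toMeasurable μ E \ S) = μ (S ∪ toMeasurable μ E) :=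
    measure_add_diff hS.nullMeasurableSet _
  rw [Set.union_eq_self_of_subset_left hSsub, measure_toMeasurable] at h1
  have h2 : μ E ≤ μ (toMeasurable μ E \ S) :=
    measure_mono fun x hx => ⟨subset_toMeasurable μ E hx, fun hxS => hdisj x hxS hx⟩
  have h3 : μ S + μ (toMeasurable μ E \ S) ≤ 0 + μ (toMeasurable μ E \ S) := by
    rw [zero_add]; exact h1.le.trans h2
  have h4 := (ENNReal.add_le_add_iff_right (measure_ne_top μ _)).1 h3
  exact le_antisymm h4 zero_le

/-- **Lemma (Barron–Jensen type lower bound for supremal functionals via Young measures).**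
Let `U ⊂ ℝ^n` be an open set with finite measure and `f : U × ℝ^m → ℝ` a normal integrand
bounded from below.  If `(u_k)` is a uniformly bounded sequence in `L^∞(U;ℝ^m)` generating the
Young measure `ν = {ν_x}`, then
`liminf_k esssup_{x ∈ U} f(x, u_k(x)) ≥ esssup_{x ∈ U} (ν_x-esssup_ξ f(x,ξ))`. -/
theorem liminf_esssup_ge_esssup_young {n m : ℕ}
    (U : Set (Fin n → ℝ)) (hU : IsOpen U) (hUfin : volume U < ⊤)
    (f : (Fin n → ℝ) → (Fin m → ℝ) → ℝ)
    (hfmeas : Measurable fun p : (Fin n → ℝ) × (Fin m → ℝ) => f p.1 p.2)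
    (hflsc : ∀ᵐ x ∂(volume.restrict U), LowerSemicontinuous (f x))
    (hfbdd : ∃ c : ℝ, ∀ x ξ, c ≤ f x ξ)
    (u : ℕ → (Fin n → ℝ) → (Fin m → ℝ))
    (hubdd : ∃ C : ℝ, ∀ k, ∀ᵐ x ∂(volume.restrict U), ‖u k x‖ ≤ C)
    (ν : (Fin n → ℝ) → Measure (Fin m → ℝ))
    (hgen : GeneratesYM (volume.restrict U) u ν) :
    essSup (fun x => essSup (fun ξ => (f x ξ : EReal)) (ν x)) (volume.restrict U) ≤
      liminf (fun k => essSup (fun x => (f x (u k x) : EReal)) (volume.restrict U)) atTop := by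
  classical
  obtain ⟨hzmeas, ⟨hprob, hwmeas⟩, hconv⟩ := hgen
  set μ := volume.restrict U with hμdef
  haveI : IsFiniteMeasure μ := ⟨by rw [hμdef, Measure.restrict_apply_univ]; exact hUfin⟩
  set L := liminf (fun k => essSup (fun x => (f x (u k x) : EReal)) μ) atTop with hL
  -- key step: for every rational `t > L` and every rational ball,
  -- a.e. `x` such that `f x > t` on the doubled ball satisfies `ν x (ball) = 0`.
  have key : ∀ t : ℚ, L < ((t : ℝ) : EReal) → ∀ (q : Fin m → ℚ) (r : ℚ), 0 < r →
      ∀ᵐ x ∂μ,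
        ((∀ ξ ∈ Metric.closedBall (fun i => ((q i : ℝ))) (2 * (r : ℝ)),
            ((t : ℝ) : EReal) < (f x ξ : EReal)) →
          ν x (Metric.closedBall (fun i => ((q i : ℝ))) ((r : ℝ))) = 0) := by
    intro t ht q r hr
    set qR : Fin m → ℝ := fun i => ((q i : ℝ)) with hqR
    have hrR : (0 : ℝ) < (r : ℝ) := by exact_mod_cast hr
    obtain ⟨φ, hφ0, hφ1, hφball, hφout⟩ := exists_bump qR (r : ℝ) hrR
    set E : Set (Fin n → ℝ) :=
      {x | ∀ ξ ∈ Metric.closedBall qR (2 * (r : ℝ)), ((t : ℝ) : EReal) < (f x ξ : EReal)}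
      with hEdef
    set E' := toMeasurable μ E with hE'def
    have hE'm : MeasurableSet E' := measurableSet_toMeasurable μ E
    set h : (Fin n → ℝ) → ℝ := E'.indicator (fun _ => (1 : ℝ)) with hhdef
    have hInt : Integrable h μ := (integrable_const (1 : ℝ)).indicator hE'm
    have Htend := hconv h hInt φ
    -- the approximating integrals frequently vanish
    have hfreq : ∃ᶠ k in atTop, (∫ x, h x * φ (u k x) ∂μ) = 0 := by
      have h1 : ∃ᶠ k in atTop,
          essSup (fun x => (f x (u k x) : EReal)) μ < ((t : ℝ) : EReal) :=
        frequently_lt_of_liminf_lt (by isBoundedDefault) ht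
      refine h1.mono fun k hk => ?_
      have hae2 : ∀ᵐ x ∂μ, (f x (u k x) : EReal) < ((t : ℝ) : EReal) :=
        ae_lt_of_essSup_lt hk
      have hgm : Measurable fun x => (f x (u k x) : EReal) :=
        measurable_coe_real_ereal.comp (hfmeas.comp (measurable_id.prodMk (hzmeas k)))
      have hφm : Measurable fun x => φ (u k x) :=
        φ.continuous.measurable.comp (hzmeas k)
      set S : Set (Fin n → ℝ) :=
        E' ∩ ({x | φ (u k x) = 0}ᶜ ∩ {x | (f x (u k x) : EReal) < ((t : ℝ) : EReal)})
        with hSdef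
      have hSm : MeasurableSet S := by
        refine hE'm.inter (MeasurableSet.inter ?_ ?_)
        · exact (hφm (measurableSet_singleton 0)).compl
        · exact hgm measurableSet_Iio
      have hSnull : μ S = 0 := by
        refine null_of_subset_toMeasurable μ hSm (fun x hx => hx.1) ?_
        rintro x ⟨hxE', hxφ, hxlt⟩ hxE
        have hball : u k x ∈ Metric.closedBall qR (2 * (r : ℝ)) := by
          by_contra hout
          exact hxφ (hφout _ (le_of_lt (not_le.1 (fun hh =>
            hout (Metric.mem_closedBall.2 hh)))))
        exact absurd (hxE _ hball) (not_lt.2 hxlt.le)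
      apply integral_eq_zero_of_ae
      have hSc : ∀ᵐ x ∂μ, x ∉ S := (measure_eq_zero_iff_ae_notMem (μ := μ)).1 hSnull
      filter_upwards [hae2, hSc] with x hx1 hx2
      by_cases hE'x : x ∈ E'
      · by_cases hφx : φ (u k x) = 0
        · simp [hφx]
        · exact absurd ⟨hE'x, hφx, hx1⟩ hx2
      · simp [hhdef, Set.indicator_of_notMem hE'x]
    -- hence the limit vanishes
    have hI0 : (∫ x, h x * ∫ ξ, φ ξ ∂(ν x) ∂μ) = 0 := by
      obtain ⟨σ, hσ, hσ0⟩ := extraction_of_frequently_atTop hfreq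
      have h2 : Tendsto (fun nn => ∫ x, h x * φ (u (σ nn) x) ∂μ) atTop
          (𝓝 (∫ x, h x * ∫ ξ, φ ξ ∂(ν x) ∂μ)) := Htend.comp hσ.tendsto_atTop
      exact tendsto_nhds_unique (h2.congr hσ0) tendsto_const_nhds
    have hw : Measurable fun x => ∫ ξ, φ ξ ∂(ν x) := hwmeas φ
    have hnn : 0 ≤ᵐ[μ] fun x => h x * ∫ ξ, φ ξ ∂(ν x) :=
      ae_of_all _ fun x =>
        mul_nonneg (Set.indicator_nonneg (fun _ _ => zero_le_one) x)
          (integral_nonneg hφ0)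
    have hInt2 : Integrable (fun x => h x * ∫ ξ, φ ξ ∂(ν x)) μ := by
      refine Integrable.mono' (integrable_const (1 : ℝ))
        ((measurable_const.indicator hE'm).mul hw).aestronglyMeasurable ?_
      filter_upwards [hprob] with x hx
      haveI := hx
      have h1 : ‖∫ ξ, φ ξ ∂(ν x)‖ ≤ 1 := by
        have := norm_integral_le_of_norm_le_const (μ := ν x) (C := 1)
          (f := fun ξ => φ ξ)
          (ae_of_all _ fun ξ => by
            rw [Real.norm_eq_abs, abs_le]; exact ⟨by linarith [hφ0 ξ], hφ1 ξ⟩)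
        simpa [measure_univ] using this
      have h2 : ‖h x‖ ≤ 1 := by
        rw [hhdef]
        by_cases hxE' : x ∈ E'
        · simp [Set.indicator_of_mem hxE']
        · simp [Set.indicator_of_notMem hxE']
      calc ‖h x * ∫ ξ, φ ξ ∂(ν x)‖ = ‖h x‖ * ‖∫ ξ, φ ξ ∂(ν x)‖ := norm_mul _ _
        _ ≤ 1 * 1 := mul_le_mul h2 h1 (norm_nonneg _) zero_le_one
        _ = 1 := one_mul _
    have hzero := (integral_eq_zero_iff_of_nonneg_ae hnn hInt2).1 hI0
    filter_upwards [hzero, hprob] with x hx hpx hmem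
    haveI := hpx
    have hxE : x ∈ E := hmem
    have hxE' : x ∈ E' := subset_toMeasurable μ E hxE
    have hw0 : (∫ ξ, φ ξ ∂(ν x)) = 0 := by
      have : h x * ∫ ξ, φ ξ ∂(ν x) = 0 := hx
      rwa [hhdef, Set.indicator_of_mem hxE', one_mul] at this
    have hle : ((ν x) (Metric.closedBall qR ((r : ℝ)))).toReal ≤ ∫ ξ, φ ξ ∂(ν x) := by
      have hint1 : Integrable ((Metric.closedBall qR ((r : ℝ))).indicator
          (1 : (Fin m → ℝ) → ℝ)) (ν x) :=
        (integrable_const 1).indicator Metric.isClosed_closedBall.measurableSet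
      have hint2 : Integrable (fun ξ => φ ξ) (ν x) := by
        refine Integrable.mono' (integrable_const (1 : ℝ))
          φ.continuous.measurable.aestronglyMeasurable (ae_of_all _ fun ξ => ?_)
        rw [Real.norm_eq_abs, abs_le]; exact ⟨by linarith [hφ0 ξ], hφ1 ξ⟩
      have hmono : ∀ ξ, (Metric.closedBall qR ((r : ℝ))).indicator
          (1 : (Fin m → ℝ) → ℝ) ξ ≤ φ ξ := by
        intro ξ
        by_cases hξ : ξ ∈ Metric.closedBall qR ((r : ℝ))
        · simp [Set.indicator_of_mem hξ, hφball ξ (Metric.mem_closedBall.1 hξ)]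
        · simp [Set.indicator_of_notMem hξ, hφ0 ξ]
      calc ((ν x) (Metric.closedBall qR ((r : ℝ)))).toReal
          = ∫ ξ, (Metric.closedBall qR ((r : ℝ))).indicator (1 : (Fin m → ℝ) → ℝ) ξ ∂(ν x) := by
            rw [integral_indicator_one Metric.isClosed_closedBall.measurableSet]; rfl
        _ ≤ ∫ ξ, φ ξ ∂(ν x) := integral_mono hint1 hint2 hmono
    rw [hw0] at hle
    have hfin : (ν x) (Metric.closedBall qR ((r : ℝ))) ≠ ⊤ := measure_ne_top _ _
    have := le_antisymm hle ENNReal.toReal_nonneg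
    rcases (ENNReal.toReal_eq_zero_iff _).1 this with h0 | h0
    · exact h0
    · exact absurd h0 hfin
  -- for every rational `t > L`, a.e. `x` has `ν x`-esssup at most `t`
  have keyt : ∀ t : ℚ, L < ((t : ℝ) : EReal) →
      ∀ᵐ x ∂μ, essSup (fun ξ => (f x ξ : EReal)) (ν x) ≤ ((t : ℝ) : EReal) := by
    intro t ht
    have hballs : ∀ᵐ x ∂μ, ∀ (q : Fin m → ℚ) (r : ℚ), 0 < r →
        ((∀ ξ ∈ Metric.closedBall (fun i => ((q i : ℝ))) (2 * (r : ℝ)),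
            ((t : ℝ) : EReal) < (f x ξ : EReal)) →
          ν x (Metric.closedBall (fun i => ((q i : ℝ))) ((r : ℝ))) = 0) := by
      rw [ae_all_iff]
      intro q
      rw [ae_all_iff]
      intro r
      by_cases hr : 0 < r
      · exact (key t ht q r hr).mono fun x hx _ => hx
      · exact ae_of_all _ fun x h' => absurd h' hr
    filter_upwards [hballs, hflsc] with x hx hlsc
    have hSopen : IsOpen {ξ : Fin m → ℝ | (t : ℝ) < f x ξ} := hlsc.isOpen_preimage (t : ℝ)
    have hnull : ν x {ξ : Fin m → ℝ | ((t : ℝ) : EReal) < (f x ξ : EReal)} = 0 := by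
      have hcover : {ξ : Fin m → ℝ | ((t : ℝ) : EReal) < (f x ξ : EReal)} ⊆
          ⋃ p : (Fin m → ℚ) × ℚ,
            (if (0 < p.2 ∧ Metric.closedBall (fun i => ((p.1 i : ℝ))) (2 * (p.2 : ℝ)) ⊆
                {ξ : Fin m → ℝ | (t : ℝ) < f x ξ})
              then Metric.closedBall (fun i => ((p.1 i : ℝ))) ((p.2 : ℝ)) else ∅) := by
        intro ξ hξ
        have hξ' : (t : ℝ) < f x ξ := EReal.coe_lt_coe_iff.1 hξ
        obtain ⟨ε, hε, hball⟩ := Metric.isOpen_iff.1 hSopen ξ hξ'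
        obtain ⟨r, hr0, hrε⟩ := exists_rat_btwn (show (0 : ℝ) < ε / 4 by linarith)
        have hr0R : (0 : ℝ) < (r : ℝ) := hr0
        have hr0Q : (0 : ℚ) < r := by exact_mod_cast hr0R
        have hqex : ∀ i, ∃ qq : ℚ, |ξ i - (qq : ℝ)| < (r : ℝ) := fun i =>
          exists_rat_near (ξ i) hr0R
        choose q hq using hqex
        have hdist : dist ξ (fun i => ((q i : ℝ))) < (r : ℝ) := by
          rw [dist_pi_lt_iff hr0R]
          intro i
          rw [Real.dist_eq]
          exact hq i
        have hsub : Metric.closedBall (fun i => ((q i : ℝ))) (2 * (r : ℝ)) ⊆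
            {ξ : Fin m → ℝ | (t : ℝ) < f x ξ} := by
          intro η hη
          apply hball
          rw [Metric.mem_ball]
          have h1 : dist η ξ ≤ dist η (fun i => ((q i : ℝ))) + dist (fun i => ((q i : ℝ))) ξ :=
            dist_triangle _ _ _
          have h2 : dist η (fun i => ((q i : ℝ))) ≤ 2 * (r : ℝ) := Metric.mem_closedBall.1 hη
          have h3 : dist (fun i => ((q i : ℝ))) ξ < (r : ℝ) := by
            rw [dist_comm]; exact hdist
          linarith
        refine Set.mem_iUnion.2 ⟨(q, r), ?_⟩
        rw [if_pos ⟨hr0Q, hsub⟩]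
        exact Metric.mem_closedBall.2 hdist.le
      refine measure_mono_null hcover (measure_iUnion_null fun p => ?_)
      split_ifs with hcond
      · exact hx p.1 p.2 hcond.1 (fun ξ hξ => EReal.coe_lt_coe_iff.2 (hcond.2 hξ))
      · simp
    have hae : ∀ᵐ ξ ∂(ν x), (f x ξ : EReal) ≤ ((t : ℝ) : EReal) := by
      rw [ae_iff]
      have heq : {ξ : Fin m → ℝ | ¬ (f x ξ : EReal) ≤ ((t : ℝ) : EReal)} =
          {ξ : Fin m → ℝ | ((t : ℝ) : EReal) < (f x ξ : EReal)} := by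
        ext ξ; simp [not_le]
      rw [heq]; exact hnull
    exact essSup_le_of_ae_le _ hae
  -- conclude
  have hfin : ∀ᵐ x ∂μ, ∀ t : ℚ, L < ((t : ℝ) : EReal) →
      essSup (fun ξ => (f x ξ : EReal)) (ν x) ≤ ((t : ℝ) : EReal) := by
    rw [ae_all_iff]
    intro t
    by_cases ht : L < ((t : ℝ) : EReal)
    · exact (keyt t ht).mono fun x hx _ => hx
    · exact ae_of_all _ fun x h' => absurd h' ht
  refine essSup_le_of_ae_le _ ?_
  filter_upwards [hfin] with x hx
  by_contra hgt
  push_neg at hgt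
  obtain ⟨qq, h1, h2⟩ := EReal.exists_rat_btwn_of_lt hgt
  exact absurd (hx qq h1) (not_le.2 h2)

end
end

section
/- Let W : ℝ^{d×N} × ℝ^{d×N} → ℝ be a Borel function, bounded from below, which is separately level convex, i.e., for every c ∈ ℝ and every fixed ζ (resp. ξ) the sublevel sets {ξ : W(ξ,ζ) ≤ c} and {ζ : W(ξ,ζ) ≤ c} are convex. Then for every pair of probability measures ν, μ on ℝ^{d×N} with finite first moments, W([ν],[μ]) ≤ (ν⊗μ)-esssup_{(ξ,ζ)∈ℝ^{d×N}×ℝ^{d×N}} W(ξ,ζ), where [ν] = ∫_{ℝ^{d×N}} ξ dν(ξ) and [μ] = ∫_{ℝ^{d×N}} ζ dμ(ζ) denote the barycenters. In particular, every separately level convex lower semicontinuous function bounded from below is separately curl Young quasiconvex. -/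
open MeasureTheory Filter Topology Bornology ZeroAtInfty NNReal ENNReal

noncomputable section

/-- The gradient matrix `∇u(x) ∈ ℝ^{d×N}` of `u : ℝ^N → ℝ^d`. -/
def gradMatrix {N d : ℕ} (u : (Fin N → ℝ) → (Fin d → ℝ)) (x : Fin N → ℝ) :
    Fin d → Fin N → ℝ :=
  fun i j => fderiv ℝ u x (Pi.single j 1) i

/-- A `W^{1,∞}`-gradient Young measure on a set `Ω ⊆ ℝ^N`: a Young measure generated by the
gradients of a bounded sequence in `W^{1,∞}(Ω;ℝ^d)`. -/
def IsGradientYoungMeasure {N d : ℕ} (Ω : Set (Fin N → ℝ))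
    (ν : (Fin N → ℝ) → Measure (Fin d → Fin N → ℝ)) : Prop :=
  ∃ u : ℕ → (Fin N → ℝ) → (Fin d → ℝ),
    (∃ C : ℝ≥0, ∀ j, LipschitzWith C (u j) ∧ ∀ x, ‖u j x‖ ≤ C) ∧
    GeneratesYM (volume.restrict Ω) (fun j x => gradMatrix (u j) x) ν

/-- A homogeneous `W^{1,∞}`-gradient Young measure: a probability measure `ν₀` on `ℝ^{d×N}`
such that the constant family `ν_x = ν₀` is a gradient Young measure on some bounded
nonempty open set. -/
def IsHomogeneousGradientYM {N d : ℕ} (ν : Measure (Fin d → Fin N → ℝ)) : Prop :=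
  IsProbabilityMeasure ν ∧ ∃ Ω : Set (Fin N → ℝ), IsOpen Ω ∧ Ω.Nonempty ∧ IsBounded Ω ∧
    IsGradientYoungMeasure Ω (fun _ => ν)

/-- `W : ℝ^{d×N} × ℝ^{d×N} → ℝ` is separately curl Young quasiconvex. -/
def SeparatelyCurlYoungQuasiconvex {N d : ℕ}
    (W : (Fin d → Fin N → ℝ) → (Fin d → Fin N → ℝ) → ℝ) : Prop :=
  ∀ ν μ : Measure (Fin d → Fin N → ℝ),
    IsHomogeneousGradientYM ν → IsHomogeneousGradientYM μ →
    (W (∫ ξ, ξ ∂ν) (∫ ζ, ζ ∂μ) : EReal) ≤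
      essSup (fun ξ => essSup (fun ζ => (W ξ ζ : EReal)) μ) ν


/-- `W` is separately level convex: all sublevel sets in each variable separately are convex. -/
def SeparatelyLevelConvex {E F : Type*} [AddCommMonoid E] [Module ℝ E]
    [AddCommMonoid F] [Module ℝ F] (W : E → F → ℝ) : Prop :=
  ∀ c : ℝ, (∀ ζ, Convex ℝ {ξ | W ξ ζ ≤ c}) ∧ (∀ ξ, Convex ℝ {ζ | W ξ ζ ≤ c})

section AuxLemmas

variable {d N : ℕ}

/-- Core Jensen-type step: if `W ≤ m` holds `ν ⊗ μ`-a.e. (in iterated form), then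
`W` at the barycenters is `≤ m`. -/
lemma core_jensen (W : (Fin d → Fin N → ℝ) → (Fin d → Fin N → ℝ) → ℝ)
    (hWlsc : LowerSemicontinuous fun p : (Fin d → Fin N → ℝ) × (Fin d → Fin N → ℝ) =>
      W p.1 p.2)
    (hWlc : SeparatelyLevelConvex W)
    (ν μ : Measure (Fin d → Fin N → ℝ)) [IsProbabilityMeasure ν] [IsProbabilityMeasure μ]
    (hνi : Integrable id ν) (hμi : Integrable id μ) {m : ℝ}
    (h : ∀ᵐ ξ ∂ν, ∀ᵐ ζ ∂μ, W ξ ζ ≤ m) :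
    W (∫ ξ, ξ ∂ν) (∫ ζ, ζ ∂μ) ≤ m := by
  have h1 : ∀ᵐ ξ ∂ν, W ξ (∫ ζ, ζ ∂μ) ≤ m := by
    filter_upwards [h] with ξ hξ
    have hconv : Convex ℝ {ζ | W ξ ζ ≤ m} := (hWlc m).2 ξ
    have hclosed : IsClosed {ζ : Fin d → Fin N → ℝ | W ξ ζ ≤ m} := by
      have heq : {ζ : Fin d → Fin N → ℝ | W ξ ζ ≤ m} =
          (fun ζ : Fin d → Fin N → ℝ => (ξ, ζ)) ⁻¹'
            ((fun p : (Fin d → Fin N → ℝ) × (Fin d → Fin N → ℝ) => W p.1 p.2) ⁻¹'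
              Set.Iic m) := rfl
      rw [heq]
      exact (hWlsc.isClosed_preimage m).preimage (Continuous.prodMk_right ξ)
    have hmem := hconv.integral_mem hclosed (f := id) hξ hμi
    simpa using hmem
  have hconv : Convex ℝ {ξ | W ξ (∫ ζ, ζ ∂μ) ≤ m} := (hWlc m).1 _
  have hclosed : IsClosed {ξ : Fin d → Fin N → ℝ | W ξ (∫ ζ, ζ ∂μ) ≤ m} := by
    have heq : {ξ : Fin d → Fin N → ℝ | W ξ (∫ ζ, ζ ∂μ) ≤ m} =
        (fun ξ : Fin d → Fin N → ℝ => (ξ, ∫ ζ, ζ ∂μ)) ⁻¹'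
          ((fun p : (Fin d → Fin N → ℝ) × (Fin d → Fin N → ℝ) => W p.1 p.2) ⁻¹'
            Set.Iic m) := rfl
    rw [heq]
    exact (hWlsc.isClosed_preimage m).preimage (continuous_id.prodMk continuous_const)
  have hmem := hconv.integral_mem hclosed (f := id) h1 hνi
  simpa using hmem

/-- A homogeneous gradient Young measure is supported in a ball, hence has finite first
moment. -/
lemma integrable_id_of_homYM {ν : Measure (Fin d → Fin N → ℝ)}
    (hν : IsHomogeneousGradientYM ν) : Integrable id ν := by
  obtain ⟨hprob, Ω, hΩo, hΩne, hΩb, u, ⟨C, hu⟩, hmeas, hYM, hgen⟩ := hν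
  haveI := hprob
  -- the generating gradients all lie in the closed ball of radius `C`
  have hball : ∀ j x, gradMatrix (u j) x ∈ Metric.closedBall (0 : Fin d → Fin N → ℝ) C := by
    intro j x
    rw [Metric.mem_closedBall, dist_zero_right]
    rw [pi_norm_le_iff_of_nonneg C.coe_nonneg]
    intro i
    rw [pi_norm_le_iff_of_nonneg C.coe_nonneg]
    intro k
    calc ‖gradMatrix (u j) x i k‖
        ≤ ‖fderiv ℝ (u j) x (Pi.single k 1)‖ := norm_le_pi_norm _ i
      _ ≤ ‖fderiv ℝ (u j) x‖ * ‖(Pi.single k 1 : Fin N → ℝ)‖ :=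
          (fderiv ℝ (u j) x).le_opNorm _
      _ ≤ (C : ℝ) * 1 := by
          refine mul_le_mul (norm_fderiv_le_of_lipschitz ℝ (hu j).1) ?_ (norm_nonneg _)
            C.coe_nonneg
          rw [Pi.norm_single]; simp
      _ = (C : ℝ) := mul_one _
  haveI : IsFiniteMeasure (volume.restrict Ω) :=
    ⟨by rw [Measure.restrict_apply_univ]; exact hΩb.measure_lt_top⟩
  -- any `C₀` function vanishing on the ball has zero `ν`-integral
  have hzero : ∀ φ : C₀((Fin d → Fin N → ℝ), ℝ),
      (∀ ξ ∈ Metric.closedBall (0 : Fin d → Fin N → ℝ) (C : ℝ), φ ξ = 0) →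
      ∫ ξ, φ ξ ∂ν = 0 := by
    intro φ hφ
    have h1 : Integrable (fun _ : Fin N → ℝ => (1 : ℝ)) (volume.restrict Ω) :=
      integrable_const 1
    have htt := hgen _ h1 φ
    have hconst : (fun j => ∫ x, (1 : ℝ) * φ (gradMatrix (u j) x) ∂(volume.restrict Ω)) =
        fun _ => (0 : ℝ) := by
      funext j
      have hz : ∀ x, (1 : ℝ) * φ (gradMatrix (u j) x) = 0 := fun x => by
        rw [hφ _ (hball j x)]; ring
      simp only [hz, integral_zero]
    rw [hconst] at htt
    have heq := tendsto_nhds_unique htt tendsto_const_nhds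
    simp only [one_mul, integral_const, Measure.restrict_apply_univ, smul_eq_mul] at heq
    have hpos : (0 : ℝ) < (volume Ω).toReal :=
      ENNReal.toReal_pos (hΩo.measure_pos volume hΩne).ne' hΩb.measure_lt_top.ne
    rcases mul_eq_zero.1 heq with h | h
    · exact absurd h (by rw [measureReal_def, Measure.restrict_apply_univ]; exact hpos.ne')
    · exact h
  -- the measure of the complement of the ball is zero
  have hcompl : ν ((Metric.closedBall (0 : Fin d → Fin N → ℝ) (C : ℝ))ᶜ) = 0 := by
    set B := Metric.closedBall (0 : Fin d → Fin N → ℝ) (C : ℝ) with hB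
    have hK : ∀ K : Set (Fin d → Fin N → ℝ), IsCompact K → K ⊆ Bᶜ → ν K = 0 := by
      intro K hKc hKB
      have hdisj : Disjoint K B := Set.disjoint_left.2 fun x hx hxB => hKB hx hxB
      obtain ⟨f, hf1, hf0, hfc, hficc⟩ :=
        exists_continuous_one_zero_of_isCompact hKc Metric.isClosed_closedBall hdisj
      set φ : C₀((Fin d → Fin N → ℝ), ℝ) := ⟨f, hfc.is_zero_at_infty⟩ with hφdef
      have hint : ∫ ξ, φ ξ ∂ν = 0 := hzero φ fun ξ hξ => hf0 hξ
      have hfi : Integrable f ν := f.continuous.integrable_of_hasCompactSupport hfc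
      have hle : (ν K).toReal ≤ ∫ ξ, f ξ ∂ν := by
        have hmono : ∫ ξ, Set.indicator K (fun _ => (1 : ℝ)) ξ ∂ν ≤ ∫ ξ, f ξ ∂ν := by
          refine integral_mono ((integrable_const 1).indicator hKc.measurableSet) hfi ?_
          intro ξ
          by_cases hx : ξ ∈ K
          · simp [Set.indicator_of_mem hx, hf1 hx]
          · simpa [Set.indicator_of_notMem hx] using (hficc ξ).1
        rwa [integral_indicator_const (1 : ℝ) hKc.measurableSet, smul_eq_mul, mul_one]
          at hmono
      rw [show ∫ ξ, f ξ ∂ν = ∫ ξ, φ ξ ∂ν from rfl, hint] at hle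
      have := le_antisymm hle ENNReal.toReal_nonneg
      rcases (ENNReal.toReal_eq_zero_iff _).1 this with h | h
      · exact h
      · exact absurd h (measure_ne_top ν K)
    by_contra hne
    obtain ⟨K, hKB, hKc, hlt⟩ :=
      (Metric.isClosed_closedBall.measurableSet.compl).exists_isCompact_lt_add
        (μ := ν) (measure_ne_top ν _) (ε := ν Bᶜ) hne
    rw [hK K hKc hKB, zero_add] at hlt
    exact lt_irrefl _ hlt
  have hae : ∀ᵐ ξ ∂ν, ‖id ξ‖ ≤ (C : ℝ) := by
    have hmem : ∀ᵐ ξ ∂ν, ξ ∈ Metric.closedBall (0 : Fin d → Fin N → ℝ) (C : ℝ) := by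
      rw [ae_iff]
      exact hcompl
    filter_upwards [hmem] with ξ hξ
    simpa [dist_zero_right] using Metric.mem_closedBall.1 hξ
  exact (integrable_const (C : ℝ)).mono' aestronglyMeasurable_id hae

end AuxLemmas

/-- **Separately level convex functions satisfy the nonlocal supremal Jensen inequality.**
If `W : ℝ^{d×N} × ℝ^{d×N} → ℝ` is Borel, bounded from below, lower semicontinuous and
separately level convex, then for all probability measures `ν, μ` with finite first moments
`W([ν],[μ]) ≤ (ν ⊗ μ)-esssup W`; in particular, `W` is separately curl Young quasiconvex. -/
theorem separatelyLevelConvex_jensen_and_curlYoungQuasiconvex {d N : ℕ}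
    (W : (Fin d → Fin N → ℝ) → (Fin d → Fin N → ℝ) → ℝ)
    (hWmeas : Measurable fun p : (Fin d → Fin N → ℝ) × (Fin d → Fin N → ℝ) => W p.1 p.2)
    (hWbdd : ∃ c : ℝ, ∀ ξ ζ, c ≤ W ξ ζ)
    (hWlsc : LowerSemicontinuous fun p : (Fin d → Fin N → ℝ) × (Fin d → Fin N → ℝ) =>
      W p.1 p.2)
    (hWlc : SeparatelyLevelConvex W) :
    (∀ ν μ : Measure (Fin d → Fin N → ℝ), IsProbabilityMeasure ν → IsProbabilityMeasure μ →
      Integrable id ν → Integrable id μ →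
      (W (∫ ξ, ξ ∂ν) (∫ ζ, ζ ∂μ) : EReal) ≤
        essSup (fun p : (Fin d → Fin N → ℝ) × (Fin d → Fin N → ℝ) => (W p.1 p.2 : EReal))
          (ν.prod μ)) ∧
    SeparatelyCurlYoungQuasiconvex W := by
  obtain ⟨c, hc⟩ := hWbdd
  constructor
  · -- product essSup version
    intro ν μ hνp hμp hνi hμi
    haveI := hνp; haveI := hμp
    set M := essSup (fun p : (Fin d → Fin N → ℝ) × (Fin d → Fin N → ℝ) =>
      (W p.1 p.2 : EReal)) (ν.prod μ) with hM
    rcases eq_or_ne M ⊤ with hMt | hMt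
    · rw [hMt]; exact le_top
    have hae : ∀ᵐ p ∂(ν.prod μ),
        (W p.1 p.2 : EReal) ≤ M := ae_le_essSup
    have hMb : M ≠ ⊥ := by
      obtain ⟨p, hp⟩ := hae.exists
      intro h
      rw [h, le_bot_iff] at hp
      exact EReal.coe_ne_bot _ hp
    set m := M.toReal with hm
    have hMm : M = (m : EReal) := (EReal.coe_toReal hMt hMb).symm
    have hae2 : ∀ᵐ ξ ∂ν, ∀ᵐ ζ ∂μ, W ξ ζ ≤ m := by
      have hprod : ∀ᵐ p ∂(ν.prod μ),
          (fun q : (Fin d → Fin N → ℝ) × (Fin d → Fin N → ℝ) => W q.1 q.2 ≤ m) p := by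
        filter_upwards [hae] with p hp
        rw [hMm] at hp
        exact_mod_cast hp
      exact Measure.ae_ae_of_ae_prod hprod
    have hkey := core_jensen W hWlsc hWlc ν μ hνi hμi hae2
    rw [hMm]
    exact_mod_cast hkey
  · -- separate curl Young quasiconvexity
    intro ν μ hν hμ
    haveI := hν.1; haveI := hμ.1
    have hνi := integrable_id_of_homYM hν
    have hμi := integrable_id_of_homYM hμ
    set M := essSup (fun ξ => essSup (fun ζ => (W ξ ζ : EReal)) μ) ν with hM
    rcases eq_or_ne M ⊤ with hMt | hMt
    · rw [hMt]; exact le_top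
    have hg : ∀ ξ, (c : EReal) ≤ essSup (fun ζ => (W ξ ζ : EReal)) μ := by
      intro ξ
      calc (c : EReal) = essSup (fun _ => (c : EReal)) μ :=
            (essSup_const _ (IsProbabilityMeasure.ne_zero μ)).symm
        _ ≤ _ := essSup_mono_ae (ae_of_all _ fun ζ => EReal.coe_le_coe_iff.2 (hc ξ ζ))
    have hMb : M ≠ ⊥ := by
      have hcM : (c : EReal) ≤ M := by
        calc (c : EReal) = essSup (fun _ => (c : EReal)) ν :=
              (essSup_const _ (IsProbabilityMeasure.ne_zero ν)).symm
          _ ≤ _ := essSup_mono_ae (ae_of_all _ fun ξ => hg ξ)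
      intro h
      rw [h, le_bot_iff] at hcM
      exact EReal.coe_ne_bot _ hcM
    set m := M.toReal with hm
    have hMm : M = (m : EReal) := (EReal.coe_toReal hMt hMb).symm
    have hae2 : ∀ᵐ ξ ∂ν, ∀ᵐ ζ ∂μ, W ξ ζ ≤ m := by
      filter_upwards [ae_le_essSup
        (f := fun ξ => essSup (fun ζ => (W ξ ζ : EReal)) μ) (μ := ν)] with ξ hξ
      filter_upwards [ae_le_essSup (f := fun ζ => (W ξ ζ : EReal)) (μ := μ)] with ζ hζ
      have hle : (W ξ ζ : EReal) ≤ (m : EReal) := le_trans hζ (hMm ▸ hξ)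
      exact_mod_cast hle
    have hkey := core_jensen W hWlsc hWlc ν μ hνi hμi hae2
    rw [hMm]
    exact_mod_cast hkey

end
end
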